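/- Fix x_j ∈ (0,1]. On the open interval 0 < x_i < x_j, the function x_i ↦ U_i(x_i, x_j) is differentiable with derivative ∂U_i/∂x_i = c((x_j − x_i)/2) − c(x_i). -/

import Mathlib

open MeasureTheory Set

/-- The wage the benefactor at `b` pays: the upper envelope of the two
politicians' policy-production costs. -/
noncomputable def w (c : ℝ → ℝ) (x₁ x₂ b : ℝ) : ℝ :=
  max (c |x₁ - b|) (c |x₂ - b|)

/-- Politician `i`'s expected utility when she locates at `xi` and the
opponent at `xj`, benefactors being uniform on `[0,1]`. -/
noncomputable def U (c : ℝ → ℝ) (xi xj : ℝ) : ℝ :=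
  ∫ b in (0:ℝ)..1, (w c xi xj b - c |xi - b|)

theorem deriv_left_region (c : ℝ → ℝ)
    (hc : ContinuousOn c (Icc 0 1)) (hmono : StrictMonoOn c (Icc 0 1))
    (xj : ℝ) (hxj : xj ∈ Ioc (0:ℝ) 1) :
    ∀ xi ∈ Ioo (0:ℝ) xj,
      HasDerivAt (fun x => U c x xj) (c ((xj - xi) / 2) - c xi) xi := by
  obtain ⟨hxj0, hxj1⟩ := hxj
  intro xi hxi
  obtain ⟨hxi0, hxixj⟩ := hxi
  have hmemabs : ∀ {y b : ℝ}, y ∈ Icc (0:ℝ) 1 → b ∈ Icc (0:ℝ) 1 → |y - b| ∈ Icc (0:ℝ) 1 := by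
    rintro y b ⟨hy0, hy1⟩ ⟨hb0, hb1⟩
    refine ⟨abs_nonneg _, ?_⟩
    rw [abs_sub_le_iff]; constructor <;> linarith
  have hci : ∀ a b : ℝ, a ∈ Icc (0:ℝ) 1 → b ∈ Icc (0:ℝ) 1 →
      IntervalIntegrable c volume a b := fun a b ha hb =>
    (hc.mono (uIcc_subset_Icc ha hb)).intervalIntegrable
  have hcabs : ∀ y ∈ Icc (0:ℝ) 1, ContinuousOn (fun b => c |y - b|) (Icc 0 1) := by
    intro y hy
    exact hc.comp ((continuous_const.sub continuous_id).abs).continuousOn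
      (fun b hb => hmemabs hy hb)
  set F : ℝ → ℝ := fun t => ∫ s in (0:ℝ)..t, c s with hF
  -- key explicit formula on the region
  have key : ∀ x ∈ Ioo (0:ℝ) xj, U c x xj = F xj - 2 * F ((xj - x) / 2) - F x := by
    intro x hx
    obtain ⟨hx0, hxxj⟩ := hx
    have hx1 : x < 1 := lt_of_lt_of_le hxxj hxj1
    have hxI : x ∈ Icc (0:ℝ) 1 := ⟨hx0.le, hx1.le⟩
    have hxjI : xj ∈ Icc (0:ℝ) 1 := ⟨hxj0.le, hxj1⟩
    set m := (x + xj) / 2 with hm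
    have hm0 : 0 < m := by positivity
    have hxm : x < m := by simp only [hm]; linarith
    have hmxj : m < xj := by simp only [hm]; linarith
    have hm1 : m ≤ 1 := le_trans hmxj.le hxj1
    have hmI : m ∈ Icc (0:ℝ) 1 := ⟨hm0.le, hm1⟩
    have h0I : (0:ℝ) ∈ Icc (0:ℝ) 1 := ⟨le_refl _, zero_le_one⟩
    have h1I : (1:ℝ) ∈ Icc (0:ℝ) 1 := ⟨zero_le_one, le_refl _⟩
    -- continuity of the integrand on [0,1]
    have hg : ContinuousOn (fun b => w c x xj b - c |x - b|) (Icc 0 1) := by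
      have h1 := hcabs x hxI
      have h2 := hcabs xj hxjI
      exact (h1.sup h2).sub h1
    have hgint : ∀ a b : ℝ, a ∈ Icc (0:ℝ) 1 → b ∈ Icc (0:ℝ) 1 →
        IntervalIntegrable (fun b => w c x xj b - c |x - b|) volume a b := fun a b ha hb =>
      (hg.mono (uIcc_subset_Icc ha hb)).intervalIntegrable
    have hmonoton : MonotoneOn c (Icc (0:ℝ) 1) := hmono.monotoneOn
    -- split the integral at m
    have hsplit : U c x xj = (∫ b in (0:ℝ)..m, (w c x xj b - c |x - b|))
        + ∫ b in m..(1:ℝ), (w c x xj b - c |x - b|) := by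
      rw [U, ← intervalIntegral.integral_add_adjacent_intervals (hgint 0 m h0I hmI)
        (hgint m 1 hmI h1I)]
    -- the right piece vanishes
    have hright : (∫ b in m..(1:ℝ), (w c x xj b - c |x - b|)) = 0 := by
      have : ∀ b ∈ uIcc m (1:ℝ), (w c x xj b - c |x - b|) = (0:ℝ) := by
        intro b hb
        rw [uIcc_of_le hm1] at hb
        obtain ⟨hbm, hb1⟩ := hb
        have hbI : b ∈ Icc (0:ℝ) 1 := ⟨le_trans hm0.le hbm, hb1⟩
        have hle : |xj - b| ≤ |x - b| := by
          rw [abs_sub_le_iff, abs_of_nonpos (by simp only [hm] at hbm; linarith)]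
          constructor <;> [skip; skip] <;> (simp only [hm] at hbm; linarith)
        have : c |xj - b| ≤ c |x - b| :=
          hmonoton (hmemabs hxjI hbI) (hmemabs hxI hbI) hle
        simp only [w]
        rw [max_eq_left this, sub_self]
      rw [intervalIntegral.integral_congr this]
      simp
    -- the left piece
    have hleft : (∫ b in (0:ℝ)..m, (w c x xj b - c |x - b|))
        = (∫ b in (0:ℝ)..m, (c (xj - b) - c |x - b|)) := by
      apply intervalIntegral.integral_congr
      intro b hb
      rw [uIcc_of_le hm0.le] at hb
      obtain ⟨hb0, hbm⟩ := hb
      have hbI : b ∈ Icc (0:ℝ) 1 := ⟨hb0, le_trans hbm hm1⟩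
      have habs : |xj - b| = xj - b := abs_of_nonneg (by linarith)
      have hle : |x - b| ≤ |xj - b| := by
        rw [habs, abs_sub_le_iff]
        constructor <;> [skip; skip] <;> (simp only [hm] at hbm; linarith)
      have : c |x - b| ≤ c |xj - b| :=
        hmonoton (hmemabs hxI hbI) (hmemabs hxjI hbI) hle
      simp only [w]
      rw [max_eq_right this, habs]
    -- compute ∫₀^m c (xj - b)
    have hA : (∫ b in (0:ℝ)..m, c (xj - b)) = F xj - F ((xj - x) / 2) := by
      rw [intervalIntegral.integral_comp_sub_left c xj, sub_zero]
      have hxjmI : xj - m ∈ Icc (0:ℝ) 1 := ⟨by linarith, by linarith⟩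
      have := intervalIntegral.integral_interval_sub_left (hci 0 xj h0I hxjI)
        (hci 0 (xj - m) h0I hxjmI)
      rw [hF]
      have hmeq : xj - m = (xj - x) / 2 := by simp only [hm]; ring
      rw [← hmeq, ← this]
    -- compute ∫₀^m c |x - b|
    have hB : (∫ b in (0:ℝ)..m, c |x - b|) = F x + F ((xj - x) / 2) := by
      have hint1 : IntervalIntegrable (fun b => c |x - b|) volume 0 x :=
        ((hcabs x hxI).mono (uIcc_subset_Icc h0I hxI)).intervalIntegrable
      have hint2 : IntervalIntegrable (fun b => c |x - b|) volume x m :=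
        ((hcabs x hxI).mono (uIcc_subset_Icc hxI hmI)).intervalIntegrable
      rw [← intervalIntegral.integral_add_adjacent_intervals hint1 hint2]
      have e1 : (∫ b in (0:ℝ)..x, c |x - b|) = F x := by
        have : (∫ b in (0:ℝ)..x, c |x - b|) = ∫ b in (0:ℝ)..x, c (x - b) := by
          apply intervalIntegral.integral_congr
          intro b hb
          rw [uIcc_of_le hx0.le] at hb
          show c |x - b| = c (x - b)
          rw [abs_of_nonneg (by linarith [hb.2])]
        rw [this, intervalIntegral.integral_comp_sub_left c x, sub_self, sub_zero]
      have e2 : (∫ b in x..m, c |x - b|) = F ((xj - x) / 2) := by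
        have : (∫ b in x..m, c |x - b|) = ∫ b in x..m, c (b - x) := by
          apply intervalIntegral.integral_congr
          intro b hb
          rw [uIcc_of_le hxm.le] at hb
          show c |x - b| = c (b - x)
          rw [abs_of_nonpos (by linarith [hb.1]), neg_sub]
        rw [this, intervalIntegral.integral_comp_sub_right c x, sub_self]
        have hmeq : m - x = (xj - x) / 2 := by simp only [hm]; ring
        rw [hmeq]
      rw [e1, e2]
    have hsub : (∫ b in (0:ℝ)..m, (c (xj - b) - c |x - b|))
        = (∫ b in (0:ℝ)..m, c (xj - b)) - ∫ b in (0:ℝ)..m, c |x - b| := by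
      apply intervalIntegral.integral_sub
      · have hcont : ContinuousOn (fun b => c (xj - b)) (Icc 0 m) := by
          refine hc.comp (continuous_const.sub continuous_id).continuousOn ?_
          rintro b ⟨hb0, hbm⟩
          exact ⟨by linarith, by linarith⟩
        exact (hcont.mono (by rw [uIcc_of_le hm0.le])).intervalIntegrable
      · exact ((hcabs x hxI).mono (uIcc_subset_Icc h0I hmI)).intervalIntegrable
    rw [hsplit, hright, hleft, hsub, hA, hB]
    ring
  -- derivative of the explicit formula
  have hxi1 : xi < 1 := lt_of_lt_of_le hxixj hxj1
  have hdI : (xj - xi) / 2 ∈ Ioo (0:ℝ) 1 := ⟨by linarith, by linarith⟩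
  have hFd : ∀ t ∈ Ioo (0:ℝ) 1, HasDerivAt F (c t) t := by
    intro t ht
    refine intervalIntegral.integral_hasDerivAt_right
      (hci 0 t ⟨le_refl _, zero_le_one⟩ ⟨ht.1.le, ht.2.le⟩)
      ((hc.mono Ioo_subset_Icc_self).stronglyMeasurableAtFilter isOpen_Ioo t ht)
      (hc.continuousAt (Icc_mem_nhds ht.1 ht.2))
  have hinner : HasDerivAt (fun x : ℝ => (xj - x) / 2) (-1 / 2) xi := by
    simpa using (((hasDerivAt_id xi).const_sub xj).div_const 2)
  have h1 : HasDerivAt (fun x => F ((xj - x) / 2)) (c ((xj - xi) / 2) * (-1 / 2)) xi :=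
    by have := (hFd _ hdI).comp xi hinner; exact this
  have h2 : HasDerivAt F (c xi) xi := hFd xi ⟨hxi0, hxi1⟩
  have hg : HasDerivAt (fun x => F xj - 2 * F ((xj - x) / 2) - F x)
      (c ((xj - xi) / 2) - c xi) xi := by
    have := ((hasDerivAt_const xi (F xj)).sub (h1.const_mul 2)).sub h2
    convert this using 1
    · rfl
    · rfl
    · rfl
    · ring
  refine hg.congr_of_eventuallyEq ?_
  filter_upwards [isOpen_Ioo.mem_nhds (⟨hxi0, hxixj⟩ : xi ∈ Ioo 0 xj)] with x hx
  exact key x hx
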